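/- arXiv:cs/0207029 — 6 statements merged into one kernel-verified Lean document; each statement's English description precedes it below -/
import Mathlib

section
/- Let α be a type, c a closure operator on Set α, A ∈ α, and F a flock all of whose bases are finite. Then the epistemic state generated by F, contracted by A, equals the epistemic state generated by the contracted flock F − A; concretely, the two sets of admissible belief states coincide: {Γ : Set α | (∃ Δ ∈ F, Γ ⊆ Δ) ∧ A ∉ c Γ} = {Γ : Set α | ∃ Δ' ∈ F − A, Γ ⊆ Δ'} (and the labelling Γ ↦ c Γ and preference Γ ⊊ Φ agree on them by definition). -/
/-- The contraction of a flock `F` by `A`: all maximal subsets of members of `F`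
that do not imply `A`. -/
def flockContract {α : Type*} (c : ClosureOperator (Set α)) (F : Set (Set α)) (A : α) :
    Set (Set α) :=
  {Δ' : Set α | ∃ Δ ∈ F, Δ' ⊆ Δ ∧ A ∉ c Δ' ∧ ∀ Ψ : Set α, Δ' ⊂ Ψ → Ψ ⊆ Δ → A ∈ c Ψ}

/-- For a flock `F` all of whose bases are finite, the contraction by `A`
of the epistemic state generated by `F` coincides with the epistemic state generated
by the contracted flock `F − A`: their sets of admissible belief states are equal. -/
theorem flock_contraction_generates_contracted_state (α : Type*)
    (c : ClosureOperator (Set α)) (A : α) (F : Set (Set α))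
    (hF : ∀ Δ ∈ F, Set.Finite Δ) :
    {Γ : Set α | (∃ Δ ∈ F, Γ ⊆ Δ) ∧ A ∉ c Γ}
      = {Γ : Set α | ∃ Δ' ∈ flockContract c F A, Γ ⊆ Δ'} := by
  ext Γ
  simp only [Set.mem_setOf_eq]
  constructor
  · rintro ⟨⟨Δ, hΔF, hΓΔ⟩, hA⟩
    -- the family of candidate sets
    set S : Set (Set α) := {X | Γ ⊆ X ∧ X ⊆ Δ ∧ A ∉ c X} with hS
    have hSfin : S.Finite := by
      have : S ⊆ 𝒫 Δ := fun X hX => hX.2.1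
      exact ((hF Δ hΔF).finite_subsets).subset this
    have hΓS : Γ ∈ S := ⟨subset_rfl, hΓΔ, hA⟩
    obtain ⟨Δ', hΔ'S, hmax⟩ := Set.Finite.exists_maximalFor id S hSfin ⟨Γ, hΓS⟩
    refine ⟨Δ', ⟨Δ, hΔF, hΔ'S.2.1, hΔ'S.2.2, ?_⟩, hΔ'S.1⟩
    intro Ψ hΨ hΨΔ
    by_contra hAΨ
    have : Δ' = Ψ := le_antisymm hΨ.1 (hmax ⟨hΔ'S.1.trans hΨ.1, hΨΔ, hAΨ⟩ hΨ.1)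
    exact hΨ.2 this.ge
  · rintro ⟨Δ', ⟨Δ, hΔF, hΔ'Δ, hA, _⟩, hΓΔ'⟩
    exact ⟨⟨Δ, hΔF, hΓΔ'.trans hΔ'Δ⟩, fun h => hA (c.monotone hΓΔ' h)⟩
end

section
/- Let α be a type, c a closure operator on Set α, A, B ∈ α, and F a flock all of whose bases are finite. Then contraction of flocks is commutative at the level of generated epistemic states: the flocks (F − A) − B and (F − B) − A generate the same epistemic state; concretely, {Γ : Set α | ∃ Δ ∈ (F − A) − B, Γ ⊆ Δ} = {Γ : Set α | ∃ Δ ∈ (F − B) − A, Γ ⊆ Δ}, and both equal {Γ : Set α | (∃ Δ ∈ F, Γ ⊆ Δ) ∧ A ∉ c Γ ∧ B ∉ c Γ}. -/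
lemma exists_maximal_ext {α : Type*} (c : ClosureOperator (Set α)) {A : α} {Δ Γ : Set α}
    (hΔ : Δ.Finite) (hΓ : Γ ⊆ Δ) (hA : A ∉ c Γ) :
    ∃ Δ', Γ ⊆ Δ' ∧ Δ' ⊆ Δ ∧ A ∉ c Δ' ∧ ∀ Ψ, Δ' ⊂ Ψ → Ψ ⊆ Δ → A ∈ c Ψ := by
  set S : Set (Set α) := {Ψ | Γ ⊆ Ψ ∧ Ψ ⊆ Δ ∧ A ∉ c Ψ} with hS
  have hSfin : S.Finite := hΔ.finite_subsets.subset (fun Ψ h => h.2.1)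
  have hSne : S.Nonempty := ⟨Γ, subset_rfl, hΓ, hA⟩
  obtain ⟨Δ', hΔ'S, hmax⟩ := Set.Finite.exists_maximalFor id S hSfin hSne
  refine ⟨Δ', hΔ'S.1, hΔ'S.2.1, hΔ'S.2.2, fun Ψ hlt hsub => ?_⟩
  by_contra hc
  have hΨS : Ψ ∈ S := ⟨hΔ'S.1.trans hlt.le, hsub, hc⟩
  exact absurd (hmax hΨS hlt.le) (not_subset_of_ssubset hlt)

lemma down_contract {α : Type*} (c : ClosureOperator (Set α)) (A : α) (F : Set (Set α))
    (hF : ∀ Δ ∈ F, Set.Finite Δ) :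
    {Γ : Set α | ∃ Δ ∈ flockContract c F A, Γ ⊆ Δ}
      = {Γ : Set α | (∃ Δ ∈ F, Γ ⊆ Δ) ∧ A ∉ c Γ} := by
  ext Γ
  constructor
  · rintro ⟨Δ', ⟨Δ, hΔF, hsub, hA, _⟩, hΓ⟩
    refine ⟨⟨Δ, hΔF, hΓ.trans hsub⟩, fun h => hA ?_⟩
    exact c.monotone hΓ h
  · rintro ⟨⟨Δ, hΔF, hΓ⟩, hA⟩
    obtain ⟨Δ', h1, h2, h3, h4⟩ := exists_maximal_ext c (hF Δ hΔF) hΓ hA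
    exact ⟨Δ', ⟨Δ, hΔF, h2, h3, h4⟩, h1⟩

lemma contract_finite {α : Type*} (c : ClosureOperator (Set α)) (A : α) (F : Set (Set α))
    (hF : ∀ Δ ∈ F, Set.Finite Δ) : ∀ Δ ∈ flockContract c F A, Set.Finite Δ := by
  rintro Δ' ⟨Δ, hΔF, hsub, -⟩
  exact (hF Δ hΔF).subset hsub

/-- For a flock `F` all of whose bases are finite, contraction of flocks
is commutative at the level of generated epistemic states: `(F − A) − B` and
`(F − B) − A` generate the same epistemic state, and both equal the state obtained
from `F` by removing all admissible states implying `A` or `B`. -/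
theorem flock_contraction_commutes (α : Type*) (c : ClosureOperator (Set α))
    (A B : α) (F : Set (Set α)) (hF : ∀ Δ ∈ F, Set.Finite Δ) :
    {Γ : Set α | ∃ Δ ∈ flockContract c (flockContract c F A) B, Γ ⊆ Δ}
        = {Γ : Set α | ∃ Δ ∈ flockContract c (flockContract c F B) A, Γ ⊆ Δ} ∧
    {Γ : Set α | ∃ Δ ∈ flockContract c (flockContract c F A) B, Γ ⊆ Δ}
        = {Γ : Set α | (∃ Δ ∈ F, Γ ⊆ Δ) ∧ A ∉ c Γ ∧ B ∉ c Γ} := by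
  have key : ∀ (X Y : α),
      {Γ : Set α | ∃ Δ ∈ flockContract c (flockContract c F X) Y, Γ ⊆ Δ}
        = {Γ : Set α | (∃ Δ ∈ F, Γ ⊆ Δ) ∧ X ∉ c Γ ∧ Y ∉ c Γ} := by
    intro X Y
    rw [down_contract c Y (flockContract c F X) (contract_finite c X F hF)]
    ext Γ
    constructor
    · rintro ⟨hmem, hY⟩
      have : Γ ∈ {Γ : Set α | ∃ Δ ∈ flockContract c F X, Γ ⊆ Δ} := hmem
      rw [down_contract c X F hF] at this
      exact ⟨this.1, this.2, hY⟩
    · rintro ⟨hΔ, hX, hY⟩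
      have : Γ ∈ {Γ : Set α | ∃ Δ ∈ flockContract c F X, Γ ⊆ Δ} := by
        rw [down_contract c X F hF]; exact ⟨hΔ, hX⟩
      exact ⟨this, hY⟩
  refine ⟨?_, key A B⟩
  rw [key A B, key B A]
  ext Γ
  exact ⟨fun ⟨h1, h2, h3⟩ => ⟨h1, h3, h2⟩, fun ⟨h1, h2, h3⟩ => ⟨h1, h3, h2⟩⟩
end

section
/- Let α be a type, c a closure operator on Set α, and Δ₁, Δ₂ ⊆ α disjoint sets (Δ₁ ∩ Δ₂ = ∅). Then the pure merge of the epistemic states generated by the bases Δ₁ and Δ₂ is isomorphic to the epistemic state generated by the base Δ₁ ∪ Δ₂: the map (Γ₁, Γ₂) ↦ Γ₁ ∪ Γ₂ is a bijection from {Γ₁ | Γ₁ ⊆ Δ₁} × {Γ₂ | Γ₂ ⊆ Δ₂} onto {Γ | Γ ⊆ Δ₁ ∪ Δ₂}, it preserves labels, i.e. c (c Γ₁ ∪ c Γ₂) = c (Γ₁ ∪ Γ₂), and it is an order isomorphism: Γ₁ ∪ Γ₂ ⊆ Φ₁ ∪ Φ₂ ↔ (Γ₁ ⊆ Φ₁ ∧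 Γ₂ ⊆ Φ₂) for all Γ₁, Φ₁ ⊆ Δ₁ and Γ₂, Φ₂ ⊆ Δ₂. -/
lemma aux_disj_eq {α : Type*} {Δ₁ Δ₂ : Set α} (hdisj : Δ₁ ∩ Δ₂ = ∅)
    {Γ Φ : Set α} (hΓ : Γ ⊆ Δ₁) (hΦ : Φ ⊆ Δ₂) {x : α} (hx : x ∈ Γ) :
    x ∉ Φ := fun hx' => Set.eq_empty_iff_forall_notMem.mp hdisj x ⟨hΓ hx, hΦ hx'⟩

/-- For disjoint bases `Δ₁`, `Δ₂`, the pure merge of the epistemic states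
generated by `Δ₁` and `Δ₂` is isomorphic to the epistemic state generated by
`Δ₁ ∪ Δ₂`: the map `(Γ₁, Γ₂) ↦ Γ₁ ∪ Γ₂` is a bijection between the sets of
admissible states, it preserves labels (`c (c Γ₁ ∪ c Γ₂) = c (Γ₁ ∪ Γ₂)`), and it is
an order isomorphism for the componentwise preference. -/
theorem merge_of_base_states_iso_union_base (α : Type*) (c : ClosureOperator (Set α))
    (Δ₁ Δ₂ : Set α) (hdisj : Δ₁ ∩ Δ₂ = ∅) :
    Set.BijOn (fun p : Set α × Set α => p.1 ∪ p.2)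
        ({Γ₁ : Set α | Γ₁ ⊆ Δ₁} ×ˢ {Γ₂ : Set α | Γ₂ ⊆ Δ₂})
        {Γ : Set α | Γ ⊆ Δ₁ ∪ Δ₂} ∧
    (∀ Γ₁ Γ₂ : Set α, Γ₁ ⊆ Δ₁ → Γ₂ ⊆ Δ₂ → c (c Γ₁ ∪ c Γ₂) = c (Γ₁ ∪ Γ₂)) ∧
    (∀ Γ₁ Φ₁ Γ₂ Φ₂ : Set α, Γ₁ ⊆ Δ₁ → Φ₁ ⊆ Δ₁ → Γ₂ ⊆ Δ₂ → Φ₂ ⊆ Δ₂ →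
      (Γ₁ ∪ Γ₂ ⊆ Φ₁ ∪ Φ₂ ↔ Γ₁ ⊆ Φ₁ ∧ Γ₂ ⊆ Φ₂)) := by
  have key : ∀ Γ₁ Φ₁ Γ₂ Φ₂ : Set α, Γ₁ ⊆ Δ₁ → Φ₁ ⊆ Δ₁ → Γ₂ ⊆ Δ₂ → Φ₂ ⊆ Δ₂ →
      (Γ₁ ∪ Γ₂ ⊆ Φ₁ ∪ Φ₂ ↔ Γ₁ ⊆ Φ₁ ∧ Γ₂ ⊆ Φ₂) := by
    intro Γ₁ Φ₁ Γ₂ Φ₂ h1 h1' h2 h2'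
    constructor
    · intro h
      constructor
      · intro x hx
        rcases h (Or.inl hx) with h' | h'
        · exact h'
        · exact absurd h' (aux_disj_eq hdisj h1 h2' hx)
      · intro x hx
        rcases h (Or.inr hx) with h' | h'
        · exact absurd hx (aux_disj_eq hdisj h1' h2 h')
        · exact h'
    · rintro ⟨ha, hb⟩
      exact Set.union_subset_union ha hb
  refine ⟨⟨?_, ?_, ?_⟩, ?_, key⟩
  · rintro ⟨Γ₁, Γ₂⟩ ⟨h1, h2⟩
    exact Set.union_subset_union h1 h2
  · rintro ⟨Γ₁, Γ₂⟩ ⟨h1, h2⟩ ⟨Φ₁, Φ₂⟩ ⟨h1', h2'⟩ h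
    simp only at h
    have := (key Γ₁ Φ₁ Γ₂ Φ₂ h1 h1' h2 h2').mp h.le
    have := (key Φ₁ Γ₁ Φ₂ Γ₂ h1' h1 h2' h2).mp h.ge
    ext1 <;> exact subset_antisymm (by tauto) (by tauto)
  · rintro Γ hΓ
    refine ⟨(Γ ∩ Δ₁, Γ ∩ Δ₂), ⟨Set.inter_subset_right, Set.inter_subset_right⟩, ?_⟩
    simp only
    rw [← Set.inter_union_distrib_left, Set.inter_eq_left]
    exact hΓ
  · intro Γ₁ Γ₂ _ _
    apply le_antisymm
    · have h1 : c Γ₁ ≤ c (Γ₁ ∪ Γ₂) := c.monotone Set.subset_union_left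
      have h2 : c Γ₂ ≤ c (Γ₁ ∪ Γ₂) := c.monotone Set.subset_union_right
      calc c (c Γ₁ ∪ c Γ₂) ≤ c (c (Γ₁ ∪ Γ₂)) := c.monotone (sup_le h1 h2)
        _ = c (Γ₁ ∪ Γ₂) := c.idempotent _
    · exact c.monotone (Set.union_subset_union (c.le_closure _) (c.le_closure _))
end

section
/- Let α be a type, c a closure operator on Set α, and F, G flocks that have no propositions in common: (⋃₀ F) ∩ (⋃₀ G) = ∅. Let F × G = {Δ ∪ Δ' | Δ ∈ F, Δ' ∈ G} be the merge of the flocks. Then the pure merge of the epistemic states generated by F and G is isomorphic to the epistemic state generated by F × G: the map (Γ, Φ) ↦ Γ ∪ Φ is a bijection from F↓ × G↓ onto (F × G)↓, it preserves labels, i.e. c (c Γ ∪ c Φ) = c (Γ ∪ Φ), and it is an order isomorphism: Γ ∪ Φ ⊆ Γ' ∪ Φ' ↔ (Γ ⊆ Γ' ∧ Φ ⊆ Φ') for all Γ, Γ' ∈ F↓ and Φ, Φ' ∈ G↓. -/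
/-- The epistemic state generated by a flock `F`: its admissible belief states. -/
def flockDown {α : Type*} (F : Set (Set α)) : Set (Set α) :=
  {Γ : Set α | ∃ Δ ∈ F, Γ ⊆ Δ}

/-- The merge of two flocks: pairwise unions of their bases. -/
def flockMerge {α : Type*} (F G : Set (Set α)) : Set (Set α) :=
  {Θ : Set α | ∃ Δ ∈ F, ∃ Δ' ∈ G, Θ = Δ ∪ Δ'}

/-- For flocks `F`, `G` with no propositions in common, the pure merge of
the epistemic states generated by `F` and `G` is isomorphic to the epistemic state
generated by the merged flock `F × G`: the map `(Γ, Φ) ↦ Γ ∪ Φ` is a bijection from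
`F↓ × G↓` onto `(F × G)↓`, it preserves labels, and it is an order isomorphism. -/
theorem flock_merge_iso (α : Type*) (c : ClosureOperator (Set α))
    (F G : Set (Set α)) (hdisj : (⋃₀ F) ∩ (⋃₀ G) = ∅) :
    Set.BijOn (fun p : Set α × Set α => p.1 ∪ p.2)
        (flockDown F ×ˢ flockDown G) (flockDown (flockMerge F G)) ∧
    (∀ Γ Φ : Set α, Γ ∈ flockDown F → Φ ∈ flockDown G →
      c (c Γ ∪ c Φ) = c (Γ ∪ Φ)) ∧
    (∀ Γ Γ' Φ Φ' : Set α, Γ ∈ flockDown F → Γ' ∈ flockDown F →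
      Φ ∈ flockDown G → Φ' ∈ flockDown G →
      (Γ ∪ Φ ⊆ Γ' ∪ Φ' ↔ Γ ⊆ Γ' ∧ Φ ⊆ Φ')) := by

  have hsub : ∀ {Γ : Set α} {S : Set (Set α)}, Γ ∈ flockDown S → Γ ⊆ ⋃₀ S := by
    rintro Γ S ⟨Δ, hΔ, h⟩ x hx
    exact ⟨Δ, hΔ, h hx⟩
  have hdis : ∀ {Γ Φ : Set α}, Γ ∈ flockDown F → Φ ∈ flockDown G → Γ ∩ Φ = ∅ := by
    intro Γ Φ hΓ hΦ
    apply Set.eq_empty_of_subset_empty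
    rw [← hdisj]
    exact Set.inter_subset_inter (hsub hΓ) (hsub hΦ)
  have ord : ∀ Γ Γ' Φ Φ' : Set α, Γ ∈ flockDown F → Γ' ∈ flockDown F →
      Φ ∈ flockDown G → Φ' ∈ flockDown G →
      (Γ ∪ Φ ⊆ Γ' ∪ Φ' ↔ Γ ⊆ Γ' ∧ Φ ⊆ Φ') := by
    intro Γ Γ' Φ Φ' hΓ hΓ' hΦ hΦ'
    constructor
    · intro h
      constructor
      · intro x hx
        rcases h (Or.inl hx) with h1 | h1
        · exact h1
        · exact absurd (Set.mem_inter hx h1)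
            (by rw [hdis hΓ hΦ']; exact Set.notMem_empty x)
      · intro x hx
        rcases h (Or.inr hx) with h1 | h1
        · exact absurd (Set.mem_inter h1 hx)
            (by rw [hdis hΓ' hΦ]; exact Set.notMem_empty x)
        · exact h1
    · rintro ⟨h1, h2⟩
      exact Set.union_subset_union h1 h2
  refine ⟨⟨?_, ?_, ?_⟩, ?_, ord⟩
  · rintro ⟨Γ, Φ⟩ ⟨⟨Δ, hΔ, h1⟩, ⟨Δ', hΔ', h2⟩⟩
    exact ⟨Δ ∪ Δ', ⟨Δ, hΔ, Δ', hΔ', rfl⟩, Set.union_subset_union h1 h2⟩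
  · rintro ⟨Γ, Φ⟩ ⟨hΓ, hΦ⟩ ⟨Γ', Φ'⟩ ⟨hΓ', hΦ'⟩ heq
    simp only [Prod.mk.injEq]
    have h1 := (ord Γ Γ' Φ Φ' hΓ hΓ' hΦ hΦ').mp (le_of_eq heq)
    have h2 := (ord Γ' Γ Φ' Φ hΓ' hΓ hΦ' hΦ).mp (le_of_eq heq.symm)
    exact ⟨subset_antisymm h1.1 h2.1, subset_antisymm h1.2 h2.2⟩
  · rintro Θ ⟨Θ', ⟨Δ, hΔ, Δ', hΔ', rfl⟩, hΘ⟩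
    refine ⟨(Θ ∩ Δ, Θ ∩ Δ'), ⟨⟨Δ, hΔ, Set.inter_subset_right⟩,
      ⟨Δ', hΔ', Set.inter_subset_right⟩⟩, ?_⟩
    show Θ ∩ Δ ∪ Θ ∩ Δ' = Θ
    rw [← Set.inter_union_distrib_left]
    exact Set.inter_eq_self_of_subset_left hΘ
  · intro Γ Φ _ _
    apply le_antisymm
    · have h1 : c Γ ∪ c Φ ≤ c (Γ ∪ Φ) :=
        Set.union_subset (c.monotone Set.subset_union_left)
          (c.monotone Set.subset_union_right)
      calc c (c Γ ∪ c Φ) ≤ c (c (Γ ∪ Φ)) := c.monotone h1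
        _ = c (Γ ∪ Φ) := c.idempotent _
    · exact c.monotone (Set.union_subset_union (c.le_closure Γ) (c.le_closure Φ))
end

section
/- Let L be a first-order language, ι a nonempty index type, T : ι → Set (L.Sentence) a family of deductively closed theories (for each i, T i = Th(T i)), and A an L-sentence. Then ⋂ i, Th(T i ∪ {A}) = Th((⋂ i, T i) ∪ {A}). -/
open FirstOrder FirstOrder.Language

/-- The set of semantic consequences of a first-order theory. -/
def Th {L : FirstOrder.Language} (T : L.Theory) : L.Theory :=
  {φ : L.Sentence | T ⊨ᵇ φ}

lemma models_union_singleton_iff {L : FirstOrder.Language} (T : L.Theory)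
    (A φ : L.Sentence) : T ∪ {A} ⊨ᵇ φ ↔ T ⊨ᵇ (A.imp φ) := by
  rw [Theory.models_sentence_iff, Theory.models_sentence_iff]
  constructor
  · intro h M
    rw [Sentence.Realize, Formula.realize_imp]
    intro hA
    haveI hM : M ⊨ T ∪ {A} :=
      Theory.model_union_iff.2 ⟨M.is_model, Theory.model_singleton_iff.2 hA⟩
    exact h (Theory.ModelType.of (T ∪ {A}) M)
  · intro h M
    have h1 : (M : Type _) ⊨ T := (Theory.model_union_iff.1 M.is_model).1
    have h2 : (M : Type _) ⊨ A := Theory.model_singleton_iff.1 (Theory.model_union_iff.1 M.is_model).2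
    have := h (Theory.ModelType.of T M)
    rw [Sentence.Realize, Formula.realize_imp] at this
    exact this h2

lemma models_mono {L : FirstOrder.Language} {T T' : L.Theory} (h : T ⊆ T')
    {φ : L.Sentence} (hφ : T ⊨ᵇ φ) : T' ⊨ᵇ φ := by
  rw [Theory.models_sentence_iff] at hφ ⊢
  intro M
  haveI : (M : Type _) ⊨ T := M.is_model.mono h
  exact hφ (Theory.ModelType.of T M)

/-- For a nonempty family of deductively closed theories `T i` and a
sentence `A`, the intersection of the consequence sets `Th (T i ∪ {A})` equals
`Th ((⋂ i, T i) ∪ {A})`. -/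
theorem iInter_th_insert (L : FirstOrder.Language) (ι : Type*) [Nonempty ι]
    (T : ι → L.Theory) (hT : ∀ i, T i = Th (T i)) (A : L.Sentence) :
    (⋂ i, Th (T i ∪ {A})) = Th ((⋂ i, T i) ∪ {A}) := by
  ext φ
  simp only [Set.mem_iInter, Th, Set.mem_setOf_eq]
  constructor
  · intro h
    rw [models_union_singleton_iff]
    have hmem : A.imp φ ∈ ⋂ i, T i := by
      refine Set.mem_iInter.2 fun i => ?_
      rw [hT i]
      exact (models_union_singleton_iff (T i) A φ).1 (h i)
    exact Theory.models_sentence_of_mem hmem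
  · intro h i
    exact models_mono (Set.union_subset_union_left {A} (Set.iInter_subset T i)) h
end

section
/- Let α be a type, c a closure operator on Set α, F a flock, and A ∈ α a proposition not appearing in F (A ∉ ⋃₀ F). Let F + A = {Δ ∪ {A} | Δ ∈ F} be the expansion of the flock. Then the pure expansion of the epistemic state generated by F with respect to A is isomorphic to the epistemic state generated by F + A: the map (Γ, X) ↦ Γ ∪ X is a bijection from F↓ × {X | X ⊆ {A}} onto (F + A)↓, it preserves labels, i.e. c (c Γ ∪ c X) = c (Γ ∪ X), and it is an order isomorphism: Γ ∪ X ⊆ Γ' ∪ X' ↔ (Γ ⊆ Γ' ∧ X ⊆ X'). -/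
/-- The expansion of a flock `F` by a proposition `A`: add `A` to every base. -/
def flockExpand {α : Type*} (F : Set (Set α)) (A : α) : Set (Set α) :=
  {Θ : Set α | ∃ Δ ∈ F, Θ = Δ ∪ {A}}

/-- For a flock `F` and a proposition `A` not appearing in `F`, the pure
expansion of the epistemic state generated by `F` with respect to `A` is isomorphic to
the epistemic state generated by the expanded flock `F + A`: the map `(Γ, X) ↦ Γ ∪ X`
is a bijection from `F↓ × {X | X ⊆ {A}}` onto `(F + A)↓`, preserves labels, and is an
order isomorphism. -/
theorem flock_expansion_iso (α : Type*) (c : ClosureOperator (Set α))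
    (F : Set (Set α)) (A : α) (hA : A ∉ ⋃₀ F) :
    Set.BijOn (fun p : Set α × Set α => p.1 ∪ p.2)
        (flockDown F ×ˢ {X : Set α | X ⊆ {A}})
        (flockDown (flockExpand F A)) ∧
    (∀ Γ X : Set α, Γ ∈ flockDown F → X ⊆ {A} → c (c Γ ∪ c X) = c (Γ ∪ X)) ∧
    (∀ Γ Γ' X X' : Set α, Γ ∈ flockDown F → Γ' ∈ flockDown F → X ⊆ {A} → X' ⊆ {A} →
      (Γ ∪ X ⊆ Γ' ∪ X' ↔ Γ ⊆ Γ' ∧ X ⊆ X')) := by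
  have hAnot : ∀ Γ : Set α, Γ ∈ flockDown F → A ∉ Γ := by
    rintro Γ ⟨Δ, hΔ, hsub⟩ hAΓ
    exact hA ⟨Δ, hΔ, hsub hAΓ⟩
  have iso : ∀ Γ Γ' X X' : Set α, Γ ∈ flockDown F → Γ' ∈ flockDown F → X ⊆ {A} → X' ⊆ {A} →
      (Γ ∪ X ⊆ Γ' ∪ X' ↔ Γ ⊆ Γ' ∧ X ⊆ X') := by
    intro Γ Γ' X X' hΓ hΓ' hX hX'
    constructor
    · intro h
      constructor
      · intro γ hγ
        rcases h (Or.inl hγ) with h' | h'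
        · exact h'
        · exact absurd (hX' h' ▸ hγ) (hAnot Γ hΓ)
      · intro x hx
        rcases h (Or.inr hx) with h' | h'
        · exact absurd (hX hx ▸ h') (fun hc => hAnot Γ' hΓ' hc)
        · exact h'
    · rintro ⟨h1, h2⟩
      exact Set.union_subset_union h1 h2
  refine ⟨⟨?_, ?_, ?_⟩, ?_, iso⟩
  · rintro ⟨Γ, X⟩ ⟨⟨Δ, hΔ, hsub⟩, hX⟩
    exact ⟨Δ ∪ {A}, ⟨Δ, hΔ, rfl⟩, Set.union_subset_union hsub hX⟩
  · rintro ⟨Γ, X⟩ ⟨hΓ, hX⟩ ⟨Γ', X'⟩ ⟨hΓ', hX'⟩ h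
    simp only at h
    have h1 := (iso Γ Γ' X X' hΓ hΓ' hX hX').mp h.le
    have h2 := (iso Γ' Γ X' X hΓ' hΓ hX' hX).mp h.ge
    exact Prod.ext (Set.Subset.antisymm h1.1 h2.1) (Set.Subset.antisymm h1.2 h2.2)
  · rintro Θ ⟨Θ', ⟨Δ, hΔ, rfl⟩, hsub⟩
    refine ⟨(Θ \ {A}, Θ ∩ {A}), ⟨⟨Δ, hΔ, ?_⟩, Set.inter_subset_right⟩, ?_⟩
    · intro x hx
      rcases hsub hx.1 with h | h
      · exact h
      · exact absurd h hx.2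
    · simp [Set.diff_union_inter]
  · intro Γ X hΓ hX
    apply le_antisymm
    · have : c Γ ∪ c X ⊆ c (Γ ∪ X) :=
        Set.union_subset (c.monotone Set.subset_union_left)
          (c.monotone Set.subset_union_right)
      calc c (c Γ ∪ c X) ⊆ c (c (Γ ∪ X)) := c.monotone this
        _ = c (Γ ∪ X) := c.idempotent _
    · exact c.monotone (Set.union_subset_union (c.le_closure _) (c.le_closure _))
end
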